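/- For every c ≥ 1 and every n > 3c, the comb tree S_n admits no path-partition of width at most c. Consequently, the path-partition-width of S_n is at least n/3. -/
import Mathlib


/-- `B` is a path-partition of `G` indexed by `Fin m`: the bags partition the
vertex set and every edge joins vertices in bags with indices differing by at most 1. -/
def IsPathPartition {V : Type*} (G : SimpleGraph V) {m : ℕ} (B : Fin m → Finset V) : Prop :=
  (∀ v : V, ∃! i : Fin m, v ∈ B i) ∧
  ∀ ⦃v w : V⦄, G.Adj v w → ∀ ⦃i j : Fin m⦄, v ∈ B i → w ∈ B j →
    (i.val : ℤ) - j.val ≤ 1 ∧ (j.val : ℤ) - i.val ≤ 1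

/-- `B` is a path-decomposition of the part of `G` induced on `U`:
bags lie in `U`, every edge of `G` inside `U` is in a common bag, every vertex
of `U` is in some bag, and the bags containing a given vertex are consecutive. -/
def IsPathDecompOn {V : Type*} (G : SimpleGraph V) (U : Set V) {n : ℕ}
    (B : Fin n → Finset V) : Prop :=
  (∀ i, ↑(B i) ⊆ U) ∧
  (∀ ⦃v w : V⦄, G.Adj v w → v ∈ U → w ∈ U → ∃ i, v ∈ B i ∧ w ∈ B i) ∧
  (∀ v ∈ U, ∃ i, v ∈ B i) ∧
  (∀ (v : V) (i j l : Fin n), i ≤ j → j ≤ l → v ∈ B i → v ∈ B l → v ∈ B j)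

/-- The part of `G` induced on `U` has pathwidth at most `k`. -/
def PWleOn {V : Type*} (G : SimpleGraph V) (U : Set V) (k : ℕ) : Prop :=
  ∃ (n : ℕ) (B : Fin n → Finset V), 0 < n ∧ IsPathDecompOn G U B ∧
    ∀ i, (B i).card ≤ k + 1

/-- `G` has pathwidth at most `k`. -/
def PWle {V : Type*} (G : SimpleGraph V) (k : ℕ) : Prop :=
  PWleOn G Set.univ k

/-- `B` is a `T`-partition of `G`: the bags (indexed by the vertices of `T`)
partition `V(G)` and every edge of `G` joins vertices in the same bag or in
bags indexed by adjacent nodes of `T`. -/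
def IsTreePartition {ι V : Type*} (T : SimpleGraph ι) (G : SimpleGraph V)
    (B : ι → Finset V) : Prop :=
  (∀ v : V, ∃! x : ι, v ∈ B x) ∧
  ∀ ⦃v w : V⦄, G.Adj v w → ∀ ⦃x y : ι⦄, v ∈ B x → w ∈ B y → x = y ∨ T.Adj x y

/-- `C` is a tree-decomposition of `G` indexed by the tree `T`: every edge lies
in some bag and for each vertex the nodes whose bags contain it induce a
non-empty connected subgraph of `T`. -/
def IsTreeDecomp {ι V : Type*} (T : SimpleGraph ι) (G : SimpleGraph V)
    (C : ι → Finset V) : Prop :=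
  (∀ ⦃v w : V⦄, G.Adj v w → ∃ x, v ∈ C x ∧ w ∈ C x) ∧
  (∀ v : V, ∃ x, v ∈ C x) ∧
  (∀ v : V, (T.induce {x : ι | v ∈ C x}).Connected)

/-- `G` has maximum degree at most `d`. -/
def MaxDegLE {V : Type*} (G : SimpleGraph V) (d : ℕ) : Prop :=
  ∀ v : V, (G.neighborSet v).ncard ≤ d

/-- The graph obtained from `G` by deleting the vertices in `S`. -/
def delv {V : Type*} (G : SimpleGraph V) (S : Set V) : SimpleGraph V :=
  SimpleGraph.fromRel (fun a b => G.Adj a b ∧ a ∉ S ∧ b ∉ S)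

/-- The comb tree `S_n`: vertices `(0, j)` form the spine path `P` (with `n`
vertices), and for each `i ∈ {1, …, n}` the vertices `(i, j)` form the tooth
path `Q_i` (with `n` vertices), whose first vertex `(i, 0)` is joined to the
`i`-th spine vertex `(0, i-1)`. -/
def comb (n : ℕ) : SimpleGraph (Fin (n + 1) × Fin n) :=
  SimpleGraph.fromRel (fun a b =>
    (a.1 = b.1 ∧ a.2.val + 1 = b.2.val) ∨
    (a.1.val = 0 ∧ b.1.val = a.2.val + 1 ∧ b.2.val = 0))
lemma comb_step_adj {n : ℕ} (i : Fin (n+1)) (j : Fin n) (hj : j.val + 1 < n) :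
    (comb n).Adj (i, j) (i, ⟨j.val + 1, hj⟩) := by
  rw [comb, SimpleGraph.fromRel_adj]
  refine ⟨?_, Or.inl (Or.inl ⟨rfl, rfl⟩)⟩
  intro h
  have : j.val = j.val + 1 := congrArg (fun p => (Prod.snd p).val) h
  omega

lemma comb_root_adj {n : ℕ} (k : Fin n) (h0 : 0 < n) :
    (comb n).Adj ((0 : Fin (n+1)), k) (⟨k.val + 1, by omega⟩, ⟨0, h0⟩) := by
  rw [comb, SimpleGraph.fromRel_adj]
  refine ⟨?_, Or.inl (Or.inr ⟨rfl, rfl, rfl⟩)⟩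
  intro h
  have : (0 : Fin (n+1)).val = k.val + 1 := congrArg (fun p => (Prod.fst p).val) h
  simp at this

lemma comb_no_small (n c : ℕ) (hc : 1 ≤ c) (hn : 3 * c < n)
    (m : ℕ) (B : Fin m → Finset (Fin (n + 1) × Fin n))
    (hP : IsPathPartition (comb n) B) (hw : ∀ i, (B i).card ≤ c) : False := by
  obtain ⟨h1, h2⟩ := hP
  have hn0 : 0 < n := by omega
  haveI : Nonempty (Fin (n+1) × Fin n) := ⟨((0 : Fin (n+1)), ⟨0, hn0⟩)⟩
  have hfE : ∀ v : Fin (n+1) × Fin n, ∃ i : Fin m, v ∈ B i := fun v => (h1 v).exists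
  choose f hf using hfE
  set F : Fin (n+1) × Fin n → ℤ := fun v => ((f v).val : ℤ) with hF
  have hadj : ∀ {v w : Fin (n+1) × Fin n}, (comb n).Adj v w → |F v - F w| ≤ 1 := by
    intro v w h
    have := h2 h (hf v) (hf w)
    rw [abs_sub_le_iff]
    exact this
  have row_lip : ∀ (i : Fin (n+1)) (d jv : ℕ) (h : jv + d < n),
      |F (i, ⟨jv + d, h⟩) - F (i, ⟨jv, by omega⟩)| ≤ (d : ℤ) := by
    intro i d
    induction d with
    | zero => intro jv h; simp
    | succ d ih =>
      intro jv h
      have h' : jv + d < n := by omega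
      have hstep : (comb n).Adj (i, ⟨jv + d, h'⟩) (i, ⟨jv + d + 1, by omega⟩) :=
        comb_step_adj i ⟨jv + d, h'⟩ (by simp only [Fin.val_mk]; omega)
      have t1 := hadj hstep
      have t2 := ih jv h'
      have heq : (⟨jv + (d+1), h⟩ : Fin n) = ⟨jv + d + 1, by omega⟩ := by
        apply Fin.ext; show jv + (d+1) = jv + d + 1; omega
      rw [heq]
      have t3 := abs_sub_le (F (i, ⟨jv + d + 1, by omega⟩)) (F (i, ⟨jv + d, h'⟩))
        (F (i, ⟨jv, by omega⟩))
      rw [abs_sub_comm] at t1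
      push_cast
      linarith
  have row_pair : ∀ (i : Fin (n+1)) (j k : Fin n), |F (i, j) - F (i, k)| ≤ (n : ℤ) - 1 := by
    intro i j k
    rcases le_or_gt j.val k.val with h | h
    · have hk : k = ⟨j.val + (k.val - j.val), by omega⟩ := by apply Fin.ext; simp; omega
      rw [abs_sub_comm, hk]
      have t := row_lip i (k.val - j.val) j.val (by omega)
      have hj' : (⟨j.val, by omega⟩ : Fin n) = j := rfl
      rw [hj'] at t
      refine t.trans ?_
      have := k.isLt; omega
    · have hj : j = ⟨k.val + (j.val - k.val), by omega⟩ := by apply Fin.ext; simp; omega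
      rw [hj]
      have t := row_lip i (j.val - k.val) k.val (by omega)
      have hk' : (⟨k.val, by omega⟩ : Fin n) = k := rfl
      rw [hk'] at t
      refine t.trans ?_
      have := j.isLt; omega
  have to_spine : ∀ v : Fin (n+1) × Fin n, ∃ k : Fin n,
      |F v - F ((0 : Fin (n+1)), k)| ≤ (n : ℤ) := by
    rintro ⟨i, j⟩
    rcases Nat.eq_zero_or_pos i.val with hi | hi
    · refine ⟨j, ?_⟩
      have : i = (0 : Fin (n+1)) := by apply Fin.ext; simpa using hi
      rw [this]; simp
    · have hiv : i.val - 1 < n := by have := i.isLt; omega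
      refine ⟨⟨i.val - 1, hiv⟩, ?_⟩
      have hroot := comb_root_adj (n := n) ⟨i.val - 1, hiv⟩ hn0
      have hieq : (⟨(⟨i.val - 1, hiv⟩ : Fin n).val + 1, by omega⟩ : Fin (n+1)) = i := by
        apply Fin.ext; simp; omega
      rw [hieq] at hroot
      have t1 := hadj hroot
      have t2 := row_pair i j ⟨0, hn0⟩
      have t3 := abs_sub_le (F (i, j)) (F (i, ⟨0, hn0⟩)) (F ((0:Fin (n+1)), ⟨i.val - 1, hiv⟩))
      rw [abs_sub_comm] at t1
      linarith
  have pair : ∀ v w : Fin (n+1) × Fin n, |F v - F w| ≤ 3 * (n : ℤ) := by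
    intro v w
    obtain ⟨k, hk⟩ := to_spine v
    obtain ⟨k', hk'⟩ := to_spine w
    have hs := row_pair (0 : Fin (n+1)) k k'
    have A := abs_sub_le (F v) (F ((0:Fin (n+1)), k)) (F w)
    have A2 := abs_sub_le (F ((0:Fin (n+1)), k)) (F ((0:Fin (n+1)), k')) (F w)
    rw [abs_sub_comm] at hk'
    linarith
  obtain ⟨v0, -, hmin⟩ := Finset.exists_min_image Finset.univ F Finset.univ_nonempty
  obtain ⟨w0, -, hmax⟩ := Finset.exists_max_image Finset.univ F Finset.univ_nonempty
  have hrange : F w0 - F v0 ≤ 3 * (n : ℤ) := by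
    have hp := pair w0 v0
    have h0 : F v0 ≤ F w0 := hmin w0 (Finset.mem_univ _)
    rw [abs_of_nonneg (by omega)] at hp
    exact hp
  set I : Finset (Fin m) := Finset.univ.filter
    (fun i => F v0 ≤ (i.val : ℤ) ∧ (i.val : ℤ) ≤ F w0) with hI
  have hIcard : I.card ≤ 3 * n + 1 := by
    have hmaps : ∀ a ∈ I, (a.val : ℤ) ∈ Finset.Icc (F v0) (F w0) := by
      intro a ha
      rw [hI, Finset.mem_filter] at ha
      rw [Finset.mem_Icc]
      exact ha.2
    have hinj : ∀ a ∈ I, ∀ b ∈ I, (a.val : ℤ) = (b.val : ℤ) → a = b := by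
      intro a _ b _ h
      apply Fin.ext
      exact_mod_cast h
    have hle := Finset.card_le_card_of_injOn _ hmaps hinj
    rw [Int.card_Icc] at hle
    omega
  have hsub : (Finset.univ : Finset (Fin (n+1) × Fin n)) ⊆ I.biUnion B := by
    intro v _
    rw [Finset.mem_biUnion]
    refine ⟨f v, ?_, hf v⟩
    rw [hI, Finset.mem_filter]
    exact ⟨Finset.mem_univ _, hmin v (Finset.mem_univ _), hmax v (Finset.mem_univ _)⟩
  have hcount : (n + 1) * n ≤ (3 * n + 1) * c := by
    calc (n + 1) * n = (Finset.univ : Finset (Fin (n+1) × Fin n)).card := by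
          rw [Finset.card_univ]; simp
      _ ≤ (I.biUnion B).card := Finset.card_le_card hsub
      _ ≤ ∑ i ∈ I, (B i).card := Finset.card_biUnion_le
      _ ≤ ∑ i ∈ I, c := Finset.sum_le_sum (fun i _ => hw i)
      _ = I.card * c := by rw [Finset.sum_const, smul_eq_mul]
      _ ≤ (3 * n + 1) * c := Nat.mul_le_mul_right c hIcard
  nlinarith

/-- For every `c ≥ 1` and every `n > 3c`, the comb tree `S_n`
admits no path-partition of width at most `c`; consequently any path-partition
of `S_n` has width at least `n / 3`. -/
theorem stmt8 (n : ℕ) :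
    (∀ c : ℕ, 1 ≤ c → 3 * c < n →
      ¬ ∃ (m : ℕ) (B : Fin m → Finset (Fin (n + 1) × Fin n)),
          IsPathPartition (comb n) B ∧ ∀ i, (B i).card ≤ c) ∧
    (∀ c : ℕ,
      (∃ (m : ℕ) (B : Fin m → Finset (Fin (n + 1) × Fin n)),
          IsPathPartition (comb n) B ∧ ∀ i, (B i).card ≤ c) →
      n / 3 ≤ c) := by
  constructor
  · rintro c hc hn ⟨m, B, hP, hw⟩
    exact comb_no_small n c hc hn m B hP hw
  · rintro c ⟨m, B, hP, hw⟩
    by_contra hlt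
    push_neg at hlt
    have h3 : 3 * c < n := by omega
    have hn0 : 0 < n := by omega
    rcases Nat.eq_zero_or_pos c with hc0 | hc1
    · obtain ⟨i, hi, -⟩ := hP.1 ((0 : Fin (n+1)), ⟨0, hn0⟩)
      have h1 := Finset.card_pos.mpr ⟨_, hi⟩
      have h2 := hw i
      omega
    · exact comb_no_small n c hc1 h3 m B hP hw
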